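/- Let M be a finite subset of a group G, let V be a vector space over a field k, let S = L(V^M, V), and let s, t ∈ S^G be such that σ_s ∘ σ_t = id on V^G. Then the linear NUCA σ_s is post-surjective. -/
import Mathlib


open scoped BigOperators

/-- The linear NUCA `σ_s : V^G → V^G` with memory `M ⊆ G` associated with the
configuration of local defining maps `s`, given in coefficient form:
`σ_s(x)(g) = ∑_{m ∈ M} s(g,m)(x(g·m))`. -/
def nucaMap {k V G : Type*} [Field k] [AddCommGroup V] [Module k V] [Group G]
    (M : Finset G) (s : G → G → (V →ₗ[k] V)) (x : G → V) : G → V :=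
  fun g => ∑ m ∈ M, s g m (x (g * m))

/-- Two configurations are asymptotic if they agree outside a finite set. -/
def Asymptotic {G A : Type*} (x y : G → A) : Prop :=
  Set.Finite {g : G | x g ≠ y g}

/-- A map `σ : V^G → V^G` is post-surjective if for all `x, y` with `y` asymptotic to
`σ(x)` there is `z` asymptotic to `x` with `σ(z) = y`. -/
def PostSurjective {G V : Type*} (σ : (G → V) → (G → V)) : Prop :=
  ∀ x y : G → V, Asymptotic y (σ x) → ∃ z : G → V, Asymptotic z x ∧ σ z = y

/-- A right-invertible linear NUCA is post-surjective: if `σ_s ∘ σ_t = id` then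
`σ_s` is post-surjective. -/
theorem stmt3 {k V G : Type*} [Field k] [AddCommGroup V] [Module k V] [Group G]
    (M : Finset G) (s t : G → G → (V →ₗ[k] V))
    (hs : ∀ g, ∀ m ∉ M, s g m = 0) (ht : ∀ g, ∀ m ∉ M, t g m = 0)
    (h : ∀ x : G → V, nucaMap M s (nucaMap M t x) = x) :
    PostSurjective (nucaMap M s) := by
  have hadd : ∀ (u : G → G → (V →ₗ[k] V)) (x x' : G → V),
      nucaMap M u (x + x') = nucaMap M u x + nucaMap M u x' := by
    intro u x x'
    funext g
    simp [nucaMap, Finset.sum_add_distrib]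
  have hsupp : ∀ (u : G → G → (V →ₗ[k] V)) (d : G → V),
      Set.Finite {g | d g ≠ 0} → Set.Finite {g | nucaMap M u d g ≠ 0} := by
    intro u d hd
    apply Set.Finite.subset (Set.Finite.biUnion M.finite_toSet
      (fun m _ => hd.image (fun g => g * m⁻¹)))
    intro g hg
    simp only [Set.mem_setOf_eq, nucaMap] at hg
    obtain ⟨m, hm, hne⟩ : ∃ m ∈ M, d (g * m) ≠ 0 := by
      by_contra hc
      push_neg at hc
      exact hg (Finset.sum_eq_zero fun m hm => by rw [hc m hm, map_zero])
    exact Set.mem_biUnion hm ⟨g * m, hne, by group⟩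
  intro x y hxy
  set d : G → V := y - nucaMap M s x with hd
  have hdfin : Set.Finite {g | d g ≠ 0} := by
    apply hxy.subset
    intro g hg
    simp only [hd, Set.mem_setOf_eq, Pi.sub_apply, sub_ne_zero] at hg ⊢
    exact hg
  refine ⟨x + nucaMap M t d, ?_, ?_⟩
  · apply (hsupp t d hdfin).subset
    intro g hg
    simp only [Set.mem_setOf_eq, Pi.add_apply] at hg ⊢
    intro h0
    exact hg (by rw [h0, add_zero])
  · rw [hadd, h]
    simp [hd]
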